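/- In G_6, if x is conjugate to A or A^{-1} and y is conjugate to B, then the Hurwitz orbit of the pair (x, y) under the Hurwitz move σ(x, y) = (y, y^{-1} x y) has exactly 6 elements, i.e., σ^6(x, y) = (x, y) and σ^k(x, y) ≠ (x, y) for 1 ≤ k ≤ 5. -/

import Mathlib

/-- The defining relations of `G₆`: `A³ = 1`, `B² = 1`, `(AB)³ = (BA)³`. -/
def G6rels : Set (FreeGroup (Fin 2)) :=
  {FreeGroup.of 0 ^ 3, FreeGroup.of 1 ^ 2,
    (FreeGroup.of 0 * FreeGroup.of 1) ^ 3 * ((FreeGroup.of 1 * FreeGroup.of 0) ^ 3)⁻¹}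

/-- The complex reflection group `G₆` as a presented group. -/
def G6 : Type := PresentedGroup G6rels

instance : Group G6 := by unfold G6; infer_instance

/-- The generator `A` of `G₆`. -/
def G6A : G6 := PresentedGroup.of 0

/-- The generator `B` of `G₆`. -/
def G6B : G6 := PresentedGroup.of 1

/-- The Hurwitz move on pairs: `(x, y) ↦ (y, y⁻¹ x y)`. -/
def hurwitzPair {G : Type*} [Group G] : G × G → G × G :=
  fun p => (p.2, p.2⁻¹ * p.1 * p.2)

-- auxiliary lemmas
lemma G6rel_one {r : FreeGroup (Fin 2)} (hr : r ∈ G6rels) :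
    (PresentedGroup.mk G6rels r : G6) = 1 := by
  have : r ∈ Subgroup.normalClosure G6rels := Subgroup.subset_normalClosure hr
  exact (QuotientGroup.eq_one_iff _).mpr this

lemma hA : G6A ^ 3 = 1 := by
  have := G6rel_one (r := FreeGroup.of 0 ^ 3) (by left; rfl)
  simp only [G6A, PresentedGroup.of, map_pow] at this ⊢; exact this

lemma hB : G6B ^ 2 = 1 := by
  have := G6rel_one (r := FreeGroup.of 1 ^ 2) (by right; left; rfl)
  simp only [G6B, PresentedGroup.of, map_pow] at this ⊢; exact this

lemma hrel : (G6A * G6B) ^ 3 = (G6B * G6A) ^ 3 := by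
  have := G6rel_one (r := (FreeGroup.of 0 * FreeGroup.of 1) ^ 3 *
      ((FreeGroup.of 1 * FreeGroup.of 0) ^ 3)⁻¹) (by right; right; rfl)
  simp only [map_mul, map_pow, map_inv] at this
  have h2 : (G6A * G6B) ^ 3 * ((G6B * G6A) ^ 3)⁻¹ = 1 := this
  group at h2 ⊢
  exact mul_inv_eq_one.mp h2

def g6z : G6 := (G6A * G6B) ^ 3

lemma hBinv : G6B⁻¹ = G6B := by
  have h : G6B * G6B = 1 := by rw [← sq, hB]
  exact inv_eq_of_mul_eq_one_right h

lemma zA : g6z * G6A = G6A * g6z := by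
  unfold g6z
  calc (G6A * G6B) ^ 3 * G6A = G6A * (G6B * G6A) ^ 3 := by simp [pow_succ, mul_assoc]
    _ = G6A * (G6A * G6B) ^ 3 := by rw [← hrel]

lemma zB : g6z * G6B = G6B * g6z := by
  unfold g6z
  calc (G6A * G6B) ^ 3 * G6B
      = (G6A * G6B * G6A * G6B * G6A) * G6B ^ 2 := by simp [pow_succ, mul_assoc]
    _ = G6A * G6B * G6A * G6B * G6A := by rw [hB, mul_one]
    _ = G6B ^ 2 * (G6A * G6B * G6A * G6B * G6A) := by rw [hB, one_mul]
    _ = G6B * (G6B * G6A) ^ 3 := by simp [pow_succ, mul_assoc]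
    _ = G6B * (G6A * G6B) ^ 3 := by rw [← hrel]

lemma z_comm (g : G6) : g6z * g = g * g6z := by
  have : g ∈ Subgroup.centralizer {g6z} := by
    apply PresentedGroup.generated_by G6rels
    intro j
    fin_cases j <;> refine Subgroup.mem_centralizer_iff.mpr ?_ <;>
      rintro h (rfl : h = g6z)
    · exact zA
    · exact zB
  exact Subgroup.mem_centralizer_iff.mp this g6z rfl

lemma cz (g : G6) : Commute g6z g := z_comm g

lemma zpull (n : ℤ) (g w : G6) : g * (g6z ^ n * w) = g6z ^ n * (g * w) := by
  rw [← mul_assoc, ← ((cz g).zpow_left n).eq, mul_assoc]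

lemma zpull1 (g w : G6) : g * (g6z * w) = g6z * (g * w) := by
  rw [← mul_assoc, ← (cz g).eq, mul_assoc]

lemma zpullinv (g w : G6) : g * (g6z⁻¹ * w) = g6z⁻¹ * (g * w) := by
  rw [← mul_assoc, ← ((cz g).inv_left).eq, mul_assoc]

lemma hBB : G6B * G6B = 1 := by rw [← sq, hB]

lemma hA3z : G6A ^ (3:ℤ) = 1 := by
  rw [show (3:ℤ) = ((3:ℕ) : ℤ) from rfl, zpow_natCast, hA]

lemma hA2 : G6A ^ (2:ℤ) = G6A⁻¹ := by
  rw [show (2:ℤ) = 3 + (-1) from rfl, zpow_add, hA3z, one_mul, zpow_neg_one]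

lemma Amod (i : ℤ) : G6A ^ i = G6A ^ (i % 3) := by
  conv_lhs => rw [← Int.mul_ediv_add_emod i 3]
  rw [zpow_add, zpow_mul, hA3z, one_zpow, one_mul]

lemma rule1 : G6B * G6A * G6B = g6z * (G6A⁻¹ * (G6B * G6A⁻¹)) := by
  calc G6B * G6A * G6B = (G6B * G6A) ^ 3 * (G6A * G6B * G6A)⁻¹ := by
        simp [pow_succ, mul_assoc]
    _ = (G6A * G6B) ^ 3 * (G6A * G6B * G6A)⁻¹ := by rw [← hrel]
    _ = g6z * (G6A⁻¹ * (G6B⁻¹ * G6A⁻¹)) := by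
        simp [g6z, mul_assoc]
    _ = g6z * (G6A⁻¹ * (G6B * G6A⁻¹)) := by rw [hBinv]

lemma rule2 : G6B * G6A⁻¹ * G6B = g6z⁻¹ * (G6A * (G6B * G6A)) := by
  have h : (G6B * G6A * G6B)⁻¹ = (g6z * (G6A⁻¹ * (G6B * G6A⁻¹)))⁻¹ := by rw [rule1]
  simp only [mul_inv_rev, inv_inv, hBinv] at h
  calc G6B * G6A⁻¹ * G6B = G6B * (G6A⁻¹ * G6B) := by rw [mul_assoc]
    _ = G6A * (G6B * (G6A * g6z⁻¹)) := by rw [h]; simp [mul_assoc]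
    _ = g6z⁻¹ * (G6A * (G6B * G6A)) := by
        rw [show G6A * g6z⁻¹ = g6z⁻¹ * G6A from ((cz G6A).inv_left.eq).symm,
          zpullinv, zpullinv]

lemma rule1' (w : G6) :
    G6B * (G6A * (G6B * w)) = g6z * (G6A⁻¹ * (G6B * (G6A⁻¹ * w))) := by
  calc G6B * (G6A * (G6B * w)) = (G6B * G6A * G6B) * w := by simp only [mul_assoc]
    _ = g6z * (G6A⁻¹ * (G6B * G6A⁻¹)) * w := by rw [rule1]
    _ = _ := by simp only [mul_assoc]

lemma rule2' (w : G6) :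
    G6B * (G6A⁻¹ * (G6B * w)) = g6z⁻¹ * (G6A * (G6B * (G6A * w))) := by
  calc G6B * (G6A⁻¹ * (G6B * w)) = (G6B * G6A⁻¹ * G6B) * w := by simp only [mul_assoc]
    _ = g6z⁻¹ * (G6A * (G6B * G6A)) * w := by rw [rule2]
    _ = _ := by simp only [mul_assoc]

def InS (g : G6) : Prop :=
  ∃ (n i j : ℤ) (d : Bool), g = g6z ^ n * (G6A ^ i * ((cond d G6B 1) * G6A ^ j))

lemma insLA {g : G6} (h : InS g) : InS (G6A * g) := by
  obtain ⟨n, i, j, d, rfl⟩ := h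
  refine ⟨n, 1 + i, j, d, ?_⟩
  rw [zpull, zpow_add, zpow_one, mul_assoc]

lemma insLAinv {g : G6} (h : InS g) : InS (G6A⁻¹ * g) := by
  obtain ⟨n, i, j, d, rfl⟩ := h
  refine ⟨n, -1 + i, j, d, ?_⟩
  rw [zpull, zpow_add, zpow_neg_one, mul_assoc]

lemma insLB {g : G6} (h : InS g) : InS (G6B * g) := by
  obtain ⟨n, i, j, d, rfl⟩ := h
  cases d with
  | false =>
      refine ⟨n, 0, i + j, true, ?_⟩
      rw [zpull]
      congr 1
      rw [zpow_zero, one_mul, cond, cond, one_mul, ← zpow_add]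
  | true =>
      rw [cond]
      rcases (by omega : i % 3 = 0 ∨ i % 3 = 1 ∨ i % 3 = 2) with h0 | h1 | h2
      · refine ⟨n, i + j, 0, false, ?_⟩
        rw [zpull]
        congr 1
        calc G6B * (G6A ^ i * (G6B * G6A ^ j))
            = G6B * (G6B * G6A ^ j) := by rw [Amod i, h0, zpow_zero, one_mul]
          _ = (G6B * G6B) * G6A ^ j := by rw [mul_assoc]
          _ = G6A ^ i * G6A ^ j := by rw [hBB, Amod i, h0, zpow_zero]
          _ = G6A ^ (i + j) * (cond false G6B 1 * G6A ^ (0:ℤ)) := by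
              rw [← zpow_add, cond, zpow_zero, one_mul, mul_one]
      · refine ⟨n + 1, -1, -1 + j, true, ?_⟩
        rw [zpull]
        calc g6z ^ n * (G6B * (G6A ^ i * (G6B * G6A ^ j)))
            = g6z ^ n * (G6B * (G6A * (G6B * G6A ^ j))) := by
              rw [Amod i, h1, zpow_one]
          _ = g6z ^ n * (g6z * (G6A⁻¹ * (G6B * (G6A⁻¹ * G6A ^ j)))) := by rw [rule1']
          _ = g6z ^ (n + 1) * (G6A ^ (-1:ℤ) * (cond true G6B 1 * G6A ^ (-1 + j))) := by
              rw [← mul_assoc, ← zpow_add_one]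
              congr 1
              rw [cond, zpow_add, zpow_neg_one]
      · refine ⟨n - 1, 1, 1 + j, true, ?_⟩
        rw [zpull]
        calc g6z ^ n * (G6B * (G6A ^ i * (G6B * G6A ^ j)))
            = g6z ^ n * (G6B * (G6A⁻¹ * (G6B * G6A ^ j))) := by
              rw [Amod i, h2, hA2]
          _ = g6z ^ n * (g6z⁻¹ * (G6A * (G6B * (G6A * G6A ^ j)))) := by rw [rule2']
          _ = g6z ^ (n - 1) * (G6A ^ (1:ℤ) * (cond true G6B 1 * G6A ^ (1 + j))) := by
              rw [← mul_assoc, ← zpow_sub_one]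
              congr 1
              rw [cond, zpow_add, zpow_one]

lemma insLBinv {g : G6} (h : InS g) : InS (G6B⁻¹ * g) := by
  rw [hBinv]; exact insLB h

lemma ins_one : InS (1 : G6) := by
  refine ⟨0, 0, 0, false, ?_⟩
  simp

lemma decomp (g : G6) : InS g := by
  induction g using PresentedGroup.induction_on with
  | H w =>
    obtain ⟨L⟩ := w
    induction L with
    | nil =>
        have : (Quot.mk _ [] : FreeGroup (Fin 2)) = (1 : FreeGroup (Fin 2)) :=
          FreeGroup.one_eq_mk.symm
        rw [this, map_one]
        exact ins_one
    | cons p L ih =>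
        obtain ⟨a, b⟩ := p
        have hsplit : (Quot.mk _ ((a, b) :: L) : FreeGroup (Fin 2)) =
            FreeGroup.mk [(a, b)] * FreeGroup.mk L := by
          rw [FreeGroup.mul_mk]
          rfl
        rw [hsplit, map_mul]
        have hone : ∀ x : Fin 2, FreeGroup.mk [(x, true)] = FreeGroup.of x := fun _ => rfl
        have hinvm : ∀ x : Fin 2, FreeGroup.mk [(x, false)] = (FreeGroup.of x)⁻¹ := by
          intro x
          rw [← hone, FreeGroup.inv_mk]
          simp [FreeGroup.invRev]
        fin_cases a <;> cases b
        · rw [hinvm, map_inv]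
          exact insLAinv ih
        · rw [hone]
          exact insLA ih
        · rw [hinvm, map_inv]
          exact insLBinv ih
        · rw [hone]
          exact insLB ih

def pc : Equiv.Perm (Fin 4) := Equiv.swap 0 1 * Equiv.swap 1 2
def pt : Equiv.Perm (Fin 4) := Equiv.swap 0 1 * Equiv.swap 2 3

def pf : Fin 2 → Equiv.Perm (Fin 4) := ![pc, pt]

set_option maxRecDepth 10000 in
lemma hpf : ∀ r ∈ G6rels, FreeGroup.lift pf r = 1 := by
  intro r hr
  rcases hr with h | h | h
  · subst h; simp only [map_pow, FreeGroup.lift_apply_of]; decide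
  · subst h; simp only [map_pow, FreeGroup.lift_apply_of]; decide
  · subst h
    simp only [map_mul, map_pow, map_inv, FreeGroup.lift_apply_of]
    decide

def φ : G6 →* Equiv.Perm (Fin 4) := PresentedGroup.toGroup hpf

lemma φA : φ G6A = pc := PresentedGroup.toGroup.of hpf
lemma φB : φ G6B = pt := PresentedGroup.toGroup.of hpf

def cyc (a b c : Fin 4) : Equiv.Perm (Fin 4) := Equiv.swap a b * Equiv.swap b c
def l3 : List (Equiv.Perm (Fin 4)) :=
  [cyc 0 1 2, cyc 0 2 1, cyc 0 1 3, cyc 0 3 1, cyc 0 2 3, cyc 0 3 2, cyc 1 2 3, cyc 1 3 2]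
def l2 : List (Equiv.Perm (Fin 4)) :=
  [Equiv.swap 0 1 * Equiv.swap 2 3, Equiv.swap 0 2 * Equiv.swap 1 3,
   Equiv.swap 0 3 * Equiv.swap 1 2]

set_option maxRecDepth 1000000 in
set_option maxHeartbeats 4000000 in
lemma conj3 : ∀ g : Equiv.Perm (Fin 4),
    (g * pc * g⁻¹) ∈ l3 ∧ (g * pc⁻¹ * g⁻¹) ∈ l3 ∧ (g * pt * g⁻¹) ∈ l2 := by decide

set_option maxRecDepth 1000000 in
set_option maxHeartbeats 4000000 in
lemma step2 : ∀ x ∈ l3, ∀ y ∈ l2, (x * y) ^ 3 = 1 ∧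
    ∀ k ∈ [1, 2, 3, 4, 5], hurwitzPair^[k] (x, y) ≠ (x, y) := by decide

lemma φz : φ g6z = 1 := by
  have : φ g6z = (pc * pt) ^ 3 := by rw [g6z, map_pow, map_mul, φA, φB]
  rw [this]; decide

lemma pow3_zpow_mod {G : Type*} [Group G] (a : G) (h3 : a ^ (3:ℕ) = 1) (i : ℤ) :
    a ^ i = a ^ (i % 3) := by
  have h3z : a ^ (3:ℤ) = 1 := by
    rw [show (3:ℤ) = ((3:ℕ) : ℤ) from rfl, zpow_natCast, h3]
  conv_lhs => rw [← Int.mul_ediv_add_emod i 3]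
  rw [zpow_add, zpow_mul, h3z, one_zpow, one_mul]

lemma pcmod (i : ℤ) : pc ^ i = pc ^ (i % 3) := pow3_zpow_mod pc (by decide) i

lemma central (g : G6) (hg : φ g = 1) : ∀ h : G6, g * h = h * g := by
  obtain ⟨n, i, j, d, rfl⟩ := decomp g
  cases d with
  | false =>
      simp only [cond] at hg ⊢
      rw [one_mul, ← zpow_add] at hg ⊢
      simp only [map_mul, map_zpow, φz, φA, one_zpow, one_mul] at hg
      rw [pcmod] at hg
      rcases (by omega : (i + j) % 3 = 0 ∨ (i + j) % 3 = 1 ∨ (i + j) % 3 = 2) with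
        h0 | h1 | h2
      · rw [Amod, h0, zpow_zero, mul_one]
        exact fun h => ((cz h).zpow_left n).eq
      · rw [h1] at hg; exact absurd hg (by decide)
      · rw [h2] at hg; exact absurd hg (by decide)
  | true =>
      simp only [cond] at hg
      simp only [map_mul, map_zpow, φz, φA, φB, one_zpow, one_mul] at hg
      rw [pcmod i, pcmod j] at hg
      rcases (by omega : i % 3 = 0 ∨ i % 3 = 1 ∨ i % 3 = 2) with hi | hi | hi <;>
        rcases (by omega : j % 3 = 0 ∨ j % 3 = 1 ∨ j % 3 = 2) with hj | hj | hj <;>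
          rw [hi, hj] at hg <;> exact absurd hg (by decide)

lemma hh2' {G : Type*} [Group G] (x y m : G) (hm : x * y = m) :
    hurwitzPair^[2] (x, y) = (m⁻¹ * x * m, m⁻¹ * y * m) := by
  subst hm
  show hurwitzPair (hurwitzPair (x, y)) = _
  simp only [hurwitzPair, Prod.mk.injEq, mul_inv_rev]
  constructor <;> simp [mul_assoc]

lemma hurwitz_six {G : Type*} [Group G] (a b : G)
    (h : ∀ g : G, (a * b) ^ 3 * g = g * (a * b) ^ 3) :
    hurwitzPair^[6] (a, b) = (a, b) := by
  set m := a * b with hm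
  have e1 : hurwitzPair^[2] (a, b) = (m⁻¹ * a * m, m⁻¹ * b * m) := hh2' a b m rfl
  have e2 : hurwitzPair^[2] (m⁻¹ * a * m, m⁻¹ * b * m) =
      (m⁻¹ * (m⁻¹ * a * m) * m, m⁻¹ * (m⁻¹ * b * m) * m) := by
    refine hh2' _ _ m ?_
    rw [hm]; simp [mul_assoc]
  have e3 : hurwitzPair^[2] (m⁻¹ * (m⁻¹ * a * m) * m, m⁻¹ * (m⁻¹ * b * m) * m) =
      (m⁻¹ * (m⁻¹ * (m⁻¹ * a * m) * m) * m, m⁻¹ * (m⁻¹ * (m⁻¹ * b * m) * m) * m) := by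
    refine hh2' _ _ m ?_
    rw [hm]; simp [mul_assoc]
  have e6 : hurwitzPair^[6] (a, b) =
      (m⁻¹ * (m⁻¹ * (m⁻¹ * a * m) * m) * m, m⁻¹ * (m⁻¹ * (m⁻¹ * b * m) * m) * m) := by
    rw [show (6:ℕ) = 2 + (2 + 2) from rfl, Function.iterate_add_apply,
      Function.iterate_add_apply, e1, e2, e3]
  rw [e6]
  have cancel : ∀ g : G, m⁻¹ * (m⁻¹ * (m⁻¹ * g * m) * m) * m = g := by
    intro g
    have h1 : m ^ 3 * g = g * m ^ 3 := h g
    calc m⁻¹ * (m⁻¹ * (m⁻¹ * g * m) * m) * m = (m ^ 3)⁻¹ * (g * m ^ 3) := by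
          simp [pow_succ, mul_assoc]
      _ = (m ^ 3)⁻¹ * (m ^ 3 * g) := by rw [← h1]
      _ = g := by rw [inv_mul_cancel_left]
  rw [cancel a, cancel b]

/-- In `G₆`, if `x` is conjugate to `A` or `A⁻¹` and `y` is conjugate to `B`, then the
Hurwitz orbit of `(x, y)` has exactly 6 elements: `σ⁶(x,y) = (x,y)` and
`σᵏ(x,y) ≠ (x,y)` for `1 ≤ k ≤ 5`. -/
theorem G6_mixed_order_pair_orbit (x y : G6)
    (hx : IsConj G6A x ∨ IsConj G6A⁻¹ x) (hy : IsConj G6B y) :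
    hurwitzPair^[6] (x, y) = (x, y) ∧
    ∀ k : ℕ, 1 ≤ k → k ≤ 5 → hurwitzPair^[k] (x, y) ≠ (x, y) := by
  obtain ⟨v, hv⟩ := isConj_iff.mp hy
  have hφy : φ y ∈ l2 := by
    rw [← hv, map_mul, map_mul, map_inv, φB]
    exact (conj3 (φ v)).2.2
  have hφx : φ x ∈ l3 := by
    rcases hx with hx | hx
    · obtain ⟨u, hu⟩ := isConj_iff.mp hx
      rw [← hu, map_mul, map_mul, map_inv, φA]
      exact (conj3 (φ u)).1
    · obtain ⟨u, hu⟩ := isConj_iff.mp hx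
      rw [← hu, map_mul, map_mul, map_inv, map_inv, φA]
      exact (conj3 (φ u)).2.1
  have hstep := step2 (φ x) hφx (φ y) hφy
  constructor
  · -- part (a)
    apply hurwitz_six
    apply central
    rw [map_pow, map_mul]
    exact hstep.1
  · -- part (b)
    intro k hk1 hk5 heq
    have hsemi : Function.Semiconj (Prod.map (φ : G6 → _) (φ : G6 → _))
        hurwitzPair hurwitzPair := by
      rintro ⟨a, b⟩
      simp [hurwitzPair, Prod.map, map_mul, map_inv]
    have := (hsemi.iterate_right k) (x, y)
    rw [heq] at this
    have hfix : hurwitzPair^[k] (φ x, φ y) = (φ x, φ y) := this.symm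
    have hk : k ∈ [1, 2, 3, 4, 5] := by interval_cases k <;> simp
    exact hstep.2 k hk hfix
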